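/- Let G be a digraph and x, y chip-distributions with x ⤳ y. Then there exists a legal game transforming x into y whose firing vector f is reduced, i.e., f ≥ p fails for every nonzero period vector p of G. -/

import Mathlib

namespace ChipFiring

variable {V : Type*}

/-- Out-degree of a vertex: total multiplicity of edges leaving `v`. -/
def outdeg [Fintype V] (d : V → V → ℕ) (v : V) : ℕ := ∑ u, d v u

/-- In-degree of a vertex: total multiplicity of edges entering `v`. -/
def indeg [Fintype V] (d : V → V → ℕ) (v : V) : ℕ := ∑ u, d u v

/-- A digraph (multiplicity function) has no loops. -/
def Loopless (d : V → V → ℕ) : Prop := ∀ v, d v v = 0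

/-- Weak connectivity: each pair of vertices is joined by an undirected walk. -/
def WeaklyConnected (d : V → V → ℕ) : Prop :=
  ∀ u v : V, Relation.ReflTransGen (fun a b => d a b ≠ 0 ∨ d b a ≠ 0) u v

/-- Strong connectivity: each ordered pair of vertices is joined by a directed walk. -/
def StronglyConnected (d : V → V → ℕ) : Prop :=
  ∀ u v : V, Relation.ReflTransGen (fun a b => d a b ≠ 0) u v

/-- Eulerian: out-degree equals in-degree at each vertex. -/
def Eulerian [Fintype V] (d : V → V → ℕ) : Prop := ∀ v, outdeg d v = indeg d v

/-- The Laplacian matrix: `L(u,u) = -d⁺(u)`, and `L(u,v) = d(v,u)` for `u ≠ v`. -/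
def laplacian [Fintype V] [DecidableEq V] (d : V → V → ℕ) : Matrix V V ℤ :=
  fun u v => if u = v then -(outdeg d v : ℤ) else (d v u : ℤ)

/-- Firing vertex `v`: `v` sends one chip along each outgoing edge. -/
def fire [Fintype V] [DecidableEq V] (d : V → V → ℕ) (x : V → ℕ) (v : V) : V → ℕ :=
  fun u => if u = v then x v - outdeg d v else x u + d v u

/-- `LegalSeq d x α` : the sequence of firings `α` is legal from initial distribution `x`. -/
def LegalSeq [Fintype V] [DecidableEq V] (d : V → V → ℕ) : (V → ℕ) → List V → Prop
  | _, [] => True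
  | x, v :: rest => outdeg d v ≤ x v ∧ LegalSeq d (fire d x v) rest

/-- The chip-distribution obtained from `x` after performing the firings `α`. -/
def runGame [Fintype V] [DecidableEq V] (d : V → V → ℕ) : (V → ℕ) → List V → (V → ℕ)
  | x, [] => x
  | x, v :: rest => runGame d (fire d x v) rest

/-- The firing vector of a game: how many times each vertex is fired. -/
def firingVector [DecidableEq V] (α : List V) : V → ℕ := fun v => α.count v

/-- `x ⤳ y` : some legal game transforms `x` into `y`. -/
def Reaches [Fintype V] [DecidableEq V] (d : V → V → ℕ) (x y : V → ℕ) : Prop :=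
  ∃ α : List V, LegalSeq d x α ∧ runGame d x α = y

/-- A period vector: a nonnegative integer vector in the kernel of the Laplacian. -/
def PeriodVector [Fintype V] [DecidableEq V] (d : V → V → ℕ) (p : V → ℕ) : Prop :=
  (laplacian d).mulVec (fun v => (p v : ℤ)) = 0

/-- A vector `f ∈ ℕ^V` is reduced if `f ≥ p` fails for every nonzero period vector `p`. -/
def Reduced [Fintype V] [DecidableEq V] (d : V → V → ℕ) (f : V → ℕ) : Prop :=
  ∀ p : V → ℕ, PeriodVector d p → p ≠ 0 → ¬ (∀ v, p v ≤ f v)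

/-- A distribution is recurrent if a nonempty legal game transforms it back to itself. -/
def Recurrent [Fintype V] [DecidableEq V] (d : V → V → ℕ) (x : V → ℕ) : Prop :=
  ∃ α : List V, α ≠ [] ∧ LegalSeq d x α ∧ runGame d x α = x

/-- Linear equivalence: `x = y + Lz` for some integer vector `z`. -/
def LinEquiv [Fintype V] [DecidableEq V] (d : V → V → ℕ) (x y : V → ℕ) : Prop :=
  ∃ z : V → ℤ, ∀ v, (x v : ℤ) = (y v : ℤ) + (laplacian d).mulVec z v

/-- `x` is non-terminating: there is an infinite sequence of legal firings from `x`. -/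
def NonTerminating [Fintype V] [DecidableEq V] (d : V → V → ℕ) (x : V → ℕ) : Prop :=
  ∃ s : ℕ → V, ∀ n : ℕ, LegalSeq d x (List.ofFn (fun i : Fin n => s i))

end ChipFiring

namespace ChipFiring

/-- Delete, for each vertex `w`, the first `q w` occurrences of `w` from a list. -/
def df [DecidableEq V] (q : V → ℕ) : List V → List V
  | [] => []
  | v :: t => if q v = 0 then v :: df q t else df (Function.update q v (q v - 1)) t

lemma count_df [DecidableEq V] :
    ∀ (α : List V) (q : V → ℕ) (v : V), (df q α).count v = α.count v - q v := by
  intro α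
  induction α with
  | nil => intro q v; simp [df]
  | cons a t ih =>
    intro q v
    by_cases hq : q a = 0
    · rw [df, if_pos hq]
      rcases eq_or_ne v a with rfl | hva
      · simp [List.count_cons, ih, hq]
      · simp [List.count_cons, hva, Ne.symm hva, ih]
    · rw [df, if_neg hq]
      rcases eq_or_ne v a with rfl | hva
      · have := ih (Function.update q v (q v - 1)) v
        simp only [Function.update_self] at this
        simp [List.count_cons, this]
        omega
      · have := ih (Function.update q a (q a - 1)) v
        rw [Function.update_of_ne hva] at this
        simp [List.count_cons, hva, Ne.symm hva, this]

lemma length_eq_sum_count [Fintype V] [DecidableEq V] (α : List V) :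
    α.length = ∑ v, α.count v := by
  induction α with
  | nil => simp
  | cons a t ih =>
    simp only [List.length_cons, List.count_cons, ih, Finset.sum_add_distrib, beq_iff_eq]
    simp [Finset.sum_ite_eq, Finset.sum_ite_eq']

lemma fire_cast [Fintype V] [DecidableEq V] {d : V → V → ℕ} {c : V → ℕ} {a : V}
    (h : outdeg d a ≤ c a) (v : V) :
    ((fire d c a v : ℕ) : ℤ)
      = (c v : ℤ) + (if v = a then -(outdeg d a : ℤ) else (d a v : ℤ)) := by
  unfold fire
  rcases eq_or_ne v a with rfl | hva
  · rw [if_pos rfl, if_pos rfl]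
    push_cast [Nat.cast_sub h]
    ring
  · rw [if_neg hva, if_neg hva]
    push_cast
    ring

lemma period_sum [Fintype V] [DecidableEq V] {d : V → V → ℕ} (hloop : Loopless d)
    {p : V → ℕ} (hp : PeriodVector d p) (v : V) :
    (∑ u, (d u v : ℤ) * p u) = (p v : ℤ) * outdeg d v := by
  have h0 : (∑ u, laplacian d v u * (p u : ℤ)) = 0 := by
    have := congrFun hp v
    simpa [Matrix.mulVec, dotProduct] using this
  have hre : ∀ u, laplacian d v u * (p u : ℤ)
      = (d u v : ℤ) * p u - (if u = v then (p v : ℤ) * outdeg d v else 0) := by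
    intro u
    rcases eq_or_ne u v with rfl | huv
    · simp [laplacian, hloop u]
      ring
    · simp [laplacian, huv, Ne.symm huv]
  rw [Finset.sum_congr rfl (fun u _ => hre u)] at h0
  rw [Finset.sum_sub_distrib, Finset.sum_ite_eq' Finset.univ v] at h0
  simp at h0
  linarith

/-- Key lemma: deleting the first `q w` occurrences of each `w` (where `q` is the
remaining part of a period vector in the sense of the stated invariant) yields a legal
game with the same endpoint. -/
lemma key_lemma [Fintype V] [DecidableEq V] (d : V → V → ℕ) (hloop : Loopless d) :
    ∀ (α : List V) (c z q : V → ℕ),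
      LegalSeq d c α →
      (∀ v, (z v : ℤ) = (c v : ℤ) + (∑ u, (d u v : ℤ) * q u) - (q v : ℤ) * outdeg d v) →
      (∀ v, q v ≤ α.count v) →
      LegalSeq d z (df q α) ∧ runGame d z (df q α) = runGame d c α := by
  intro α
  induction α with
  | nil =>
    intro c z q _ hinv hcnt
    have hq0 : ∀ v, q v = 0 := fun v => Nat.le_zero.mp (by simpa using hcnt v)
    have hzc : z = c := by
      funext v
      have := hinv v
      simp [hq0] at this
      exact_mod_cast this
    subst hzc
    exact ⟨trivial, rfl⟩
  | cons a t ih =>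
    intro c z q hleg hinv hcnt
    obtain ⟨hca, hlegt⟩ := hleg
    by_cases hq : q a = 0
    · -- keep this firing
      have hza : outdeg d a ≤ z a := by
        have h1 := hinv a
        have h2 : (0 : ℤ) ≤ ∑ u, (d u a : ℤ) * q u :=
          Finset.sum_nonneg (fun u _ => by positivity)
        have : (c a : ℤ) ≤ (z a : ℤ) := by rw [h1, hq]; push_cast; linarith
        have hcz : c a ≤ z a := by exact_mod_cast this
        omega
      have hinv' : ∀ v, ((fire d z a v : ℕ) : ℤ)
          = (fire d c a v : ℤ) + (∑ u, (d u v : ℤ) * q u) - (q v : ℤ) * outdeg d v := by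
        intro v
        rw [fire_cast hza v, fire_cast hca v, hinv v]
        ring
      have hcnt' : ∀ v, q v ≤ t.count v := by
        intro v
        rcases eq_or_ne v a with rfl | hva
        · simp [hq]
        · have := hcnt v
          simpa [List.count_cons, hva, Ne.symm hva] using this
      obtain ⟨L1, R1⟩ := ih (fire d c a) (fire d z a) q hlegt hinv' hcnt'
      rw [df, if_pos hq]
      exact ⟨⟨hza, L1⟩, R1⟩
    · -- skip this firing (it is a "period" firing)
      set q' := Function.update q a (q a - 1) with hq'def
      have hq1 : 1 ≤ q a := Nat.one_le_iff_ne_zero.mpr hq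
      have hsum : ∀ v, (∑ u, (d u v : ℤ) * q' u)
          = (∑ u, (d u v : ℤ) * q u) - (if v = a then 0 else (d a v : ℤ)) := by
        intro v
        have hterm : ∀ u, (d u v : ℤ) * q' u
            = (d u v : ℤ) * q u - (if u = a then (d a v : ℤ) else 0) := by
          intro u
          rcases eq_or_ne u a with rfl | hua
          · rcases eq_or_ne v u with rfl | hvu
            · simp [hq'def, Function.update_self, hloop v]
            · simp only [hq'def, Function.update_self, if_pos rfl]
              rw [Nat.cast_sub hq1]
              push_cast
              ring
          · simp [hq'def, Function.update_of_ne hua, hua]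
        rw [Finset.sum_congr rfl (fun u _ => hterm u), Finset.sum_sub_distrib,
          Finset.sum_ite_eq' Finset.univ a]
        rcases eq_or_ne v a with rfl | hva
        · simp [hloop v]
        · simp [hva]
      have hinv' : ∀ v, (z v : ℤ)
          = (fire d c a v : ℤ) + (∑ u, (d u v : ℤ) * q' u) - (q' v : ℤ) * outdeg d v := by
        intro v
        rw [fire_cast hca v, hsum v, hinv v]
        rcases eq_or_ne v a with rfl | hva
        · simp only [if_pos rfl, hq'def, Function.update_self]
          rw [Nat.cast_sub hq1]
          push_cast
          ring
        · simp only [if_neg hva, hq'def, Function.update_of_ne hva]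
          ring
      have hcnt' : ∀ v, q' v ≤ t.count v := by
        intro v
        rcases eq_or_ne v a with rfl | hva
        · have := hcnt v
          simp [List.count_cons] at this
          simp only [hq'def, Function.update_self]
          omega
        · have := hcnt v
          simp [List.count_cons, hva, Ne.symm hva] at this
          simpa [hq'def, Function.update_of_ne hva] using this
      obtain ⟨L1, R1⟩ := ih (fire d c a) z q' hlegt hinv' hcnt'
      rw [df, if_neg hq]
      exact ⟨L1, R1⟩

lemma remove_period [Fintype V] [DecidableEq V] (d : V → V → ℕ) (hloop : Loopless d)
    (α : List V) (x : V → ℕ) (p : V → ℕ) (hleg : LegalSeq d x α)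
    (hp : PeriodVector d p) (hple : ∀ v, p v ≤ α.count v) :
    LegalSeq d x (df p α) ∧ runGame d x (df p α) = runGame d x α := by
  apply key_lemma d hloop α x x p hleg _ hple
  intro v
  rw [period_sum hloop hp v]
  ring

/-- If `x ⤳ y` then there is a legal game transforming `x` into `y`
whose firing vector is reduced. -/
theorem reaches_with_reduced_firing_vector {V : Type*} [Fintype V] [DecidableEq V]
    (d : V → V → ℕ) (hloop : Loopless d) (hconn : WeaklyConnected d)
    (x y : V → ℕ) (h : Reaches d x y) :
    ∃ α : List V, LegalSeq d x α ∧ runGame d x α = y ∧ Reduced d (firingVector α) := by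
  obtain ⟨α, hleg, hrun⟩ := h
  subst hrun
  -- strong induction on the length of the game
  clear hconn
  have main : ∀ (n : ℕ) (α : List V), α.length ≤ n → LegalSeq d x α →
      ∃ β : List V, LegalSeq d x β ∧ runGame d x β = runGame d x α ∧
        Reduced d (firingVector β) := by
    intro n
    induction n with
    | zero =>
      intro α hlen hleg
      have hnil : α = [] := List.length_eq_zero_iff.mp (Nat.le_zero.mp hlen)
      subst hnil
      refine ⟨[], trivial, rfl, ?_⟩
      intro p _ hpne hle
      apply hpne
      funext v
      have := hle v
      simp [firingVector] at this
      simpa using this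
    | succ n ih =>
      intro α hlen hleg
      by_cases hred : Reduced d (firingVector α)
      · exact ⟨α, hleg, rfl, hred⟩
      · unfold Reduced at hred
        push_neg at hred
        obtain ⟨p, hp, hpne, hple⟩ := hred
        have hple' : ∀ v, p v ≤ α.count v := hple
        obtain ⟨hleg', hrun'⟩ := remove_period d hloop α x p hleg hp hple'
        -- the deleted game is strictly shorter
        obtain ⟨w, hw⟩ : ∃ w, p w ≠ 0 := by
          by_contra hcon
          push_neg at hcon
          exact hpne (funext fun v => hcon v)
        have hlt : (df p α).length < α.length := by
          rw [length_eq_sum_count, length_eq_sum_count]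
          apply Finset.sum_lt_sum
          · intro i _
            rw [count_df]
            exact Nat.sub_le _ _
          · refine ⟨w, Finset.mem_univ w, ?_⟩
            rw [count_df]
            have h1 := hple' w
            omega
        obtain ⟨β, hβ1, hβ2, hβ3⟩ := ih (df p α) (by omega) hleg'
        exact ⟨β, hβ1, hβ2.trans hrun', hβ3⟩
  exact main α.length α le_rfl hleg

end ChipFiring
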